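/- Let α ∈ {−1,1}. There exists an injective group homomorphism φ_α : O₂(α) → (Cl(Q_α))ˣ into the group of units of the Clifford algebra Cl(Q_α) such that for every z = x + iy ∈ Circle (x, y ∈ ℝ): the underlying element of φ_α(z, 0̂) is x·1 + y·(ι(1)·ι(i)) and the underlying element of φ_α(z, 1̂) is (x·1 + y·ι(1)·ι(i))·ι(1). (This realizes O₂(α) as the pin group Pin₂(α) inside Cl(Q_α).) -/

import Mathlib

set_option linter.unnecessarySeqFocus false

open Complex

/-- Complex conjugation as a group endomorphism of the circle group. -/
noncomputable def conjC : Circle →* Circle where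
  toFun z := ⟨(starRingEnd ℂ) (z : ℂ), by
    simp only [Submonoid.unitSphere, Metric.mem_sphere, dist_zero_right]
    simp [Circle.norm_coe]⟩
  map_one' := by ext; simp
  map_mul' a b := by ext; simp <;> rfl

@[simp] lemma conjC_coe (z : Circle) : (conjC z : ℂ) = (starRingEnd ℂ) (z : ℂ) := rfl

@[simp] lemma conjC_conjC (z : Circle) : conjC (conjC z) = z := by
  ext; simp

/-- The element `-1` of the circle group. -/
noncomputable def negOneC : Circle := ⟨-1, by
  simp only [Submonoid.unitSphere, Metric.mem_sphere, dist_zero_right]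
  simp⟩

@[simp] lemma negOneC_coe : (negOneC : ℂ) = -1 := rfl

/-- The sign `α = ±1` as an element of the circle group. -/
noncomputable def sgnC (α : ℤˣ) : Circle := if α = 1 then 1 else negOneC

/-- The underlying type of a twisted extension of `ℤ₂ = {0̂, 1̂}` by a commutative group `A`,
with twisting endomorphism `τ` and cocycle value `a₀`.  An element `⟨z, t⟩` stands for the
pair `(z, t)`.  The group `O₂(α)` of the paper is the case `A = Circle`, `τ` = complex
conjugation, `a₀ = α = ±1`. -/
@[ext]
structure Tw (A : Type*) [CommGroup A] (τ : A →* A) (a₀ : A) where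
  z : A
  t : ZMod 2

namespace Tw

variable {A : Type*} [CommGroup A] {τ : A →* A} {a₀ : A}

/-- The multiplication `(z₁,0̂)(z₂,t) = (z₁z₂, t)`, `(z₁,1̂)(z₂,0̂) = (z₁·τ(z₂), 1̂)`,
`(z₁,1̂)(z₂,1̂) = (a₀·z₁·τ(z₂), 0̂)`. -/
instance : Mul (Tw A τ a₀) :=
  ⟨fun g h => ⟨(if g.t = 1 ∧ h.t = 1 then a₀ else 1) * g.z * (if g.t = 1 then τ h.z else h.z),
    g.t + h.t⟩⟩

/-- The unit `(1, 0̂)`. -/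
instance : One (Tw A τ a₀) := ⟨⟨1, 0⟩⟩

instance : Inv (Tw A τ a₀) := ⟨fun g => ⟨if g.t = 1 then a₀⁻¹ * τ g.z⁻¹ else g.z⁻¹, g.t⟩⟩

@[simp] lemma mul_z (g h : Tw A τ a₀) :
    (g * h).z = (if g.t = 1 ∧ h.t = 1 then a₀ else 1) * g.z * (if g.t = 1 then τ h.z else h.z) :=
  rfl

@[simp] lemma mul_t (g h : Tw A τ a₀) : (g * h).t = g.t + h.t := rfl

@[simp] lemma one_z : (1 : Tw A τ a₀).z = 1 := rfl
@[simp] lemma one_t : (1 : Tw A τ a₀).t = 0 := rfl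

@[simp] lemma inv_z (g : Tw A τ a₀) :
    (g⁻¹).z = if g.t = 1 then a₀⁻¹ * τ g.z⁻¹ else g.z⁻¹ := rfl
@[simp] lemma inv_t (g : Tw A τ a₀) : (g⁻¹).t = g.t := rfl

lemma zmod2_cases : ∀ t : ZMod 2, t = 0 ∨ t = 1 := by decide

instance group [Fact (∀ a : A, τ (τ a) = a)] [Fact (τ a₀ = a₀)] : Group (Tw A τ a₀) := by
  have hττ := Fact.out (p := ∀ a : A, τ (τ a) = a)
  have hτa := Fact.out (p := τ a₀ = a₀)
  refine Group.ofLeftAxioms ?_ ?_ ?_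
  · rintro ⟨z₁, t₁⟩ ⟨z₂, t₂⟩ ⟨z₃, t₃⟩
    rcases zmod2_cases t₁ with rfl | rfl <;> rcases zmod2_cases t₂ with rfl | rfl <;>
      rcases zmod2_cases t₃ with rfl | rfl <;> ext <;>
      simp [hττ, hτa, map_mul, mul_comm, mul_assoc, mul_left_comm] <;> decide
  · rintro ⟨z, t⟩
    ext <;> simp
  · rintro ⟨z, t⟩
    rcases zmod2_cases t with rfl | rfl <;> ext <;>
      simp [hττ, hτa, map_mul, mul_comm, mul_assoc, mul_left_comm] <;> decide

end Tw

instance : Fact (∀ a : Circle, conjC (conjC a) = a) := ⟨conjC_conjC⟩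

instance (α : ℤˣ) : Fact (conjC (sgnC α) = sgnC α) := ⟨by
  rcases Int.units_eq_one_or α with rfl | rfl <;> ext <;> simp [sgnC]⟩

/-- The group `O₂(α)` for a sign `α ∈ {−1, 1}`: underlying set `Circle × ℤ₂` with the
twisted multiplication `(z₁,0̂)(z₂,t) = (z₁z₂,t)`, `(z₁,1̂)(z₂,0̂) = (z₁·conj(z₂),1̂)`,
`(z₁,1̂)(z₂,1̂) = (α·z₁·conj(z₂),0̂)` and unit `(1,0̂)`. -/
abbrev O2 (α : ℤˣ) : Type := Tw Circle conjC (sgnC α)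

section Aux

/-- The sign `α` as a complex scalar for the matrix representation. -/
noncomputable def cA (α : ℤˣ) : ℂ := if α = 1 then 1 else Complex.I

lemma cA_sq (α : ℤˣ) : cA α * cA α = ((α : ℤ) : ℂ) := by
  rcases Int.units_eq_one_or α with rfl | rfl <;>
    simp [cA, Complex.I_mul_I]

lemma cA_ne_zero (α : ℤˣ) : cA α ≠ 0 := by
  rcases Int.units_eq_one_or α with rfl | rfl <;> simp [cA, Complex.I_ne_zero]

lemma units_int_coe_real_ne_zero (α : ℤˣ) : ((α : ℤ) : ℝ) ≠ 0 := by
  rcases Int.units_eq_one_or α with rfl | rfl <;> norm_num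

/-- In an `ℝ`-algebra, multiplication of elements of the form `a•1 + b•ω` where `ω² = -1`. -/
lemma key_mul {A : Type*} [Ring A] [Algebra ℝ A] {ω : A} (hω : ω * ω = -1)
    (a b c d : ℝ) : (a • (1 : A) + b • ω) * (c • (1 : A) + d • ω)
      = (a * c - b * d) • (1 : A) + (a * d + b * c) • ω := by
  simp only [mul_add, add_mul, smul_mul_smul_comm, one_mul, mul_one, hω, smul_neg]
  module

lemma complex_coeff_eq (α : ℤˣ) {x y a b : ℝ}
    (h : (x : ℂ) + ((α : ℤ) : ℂ) * y * Complex.I = (a : ℂ) + ((α : ℤ) : ℂ) * b * Complex.I) :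
    x = a ∧ y = b := by
  have hre := congrArg Complex.re h
  have him := congrArg Complex.im h
  simp only [Complex.add_re, Complex.add_im, Complex.mul_re, Complex.mul_im,
    Complex.ofReal_re, Complex.ofReal_im, Complex.I_re, Complex.I_im, Complex.intCast_re,
    Complex.intCast_im] at hre him
  constructor
  · linarith
  · have hα := units_int_coe_real_ne_zero α
    ring_nf at him
    exact mul_left_cancel₀ hα him

/-- The matrix representation `w ↦ !![0, c·conj w; c·w, 0]` of `ℂ` used to build an algebra
map out of the Clifford algebra. -/
noncomputable def mRep (α : ℤˣ) : ℂ →ₗ[ℝ] Matrix (Fin 2) (Fin 2) ℂ where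
  toFun w := !![0, cA α * (starRingEnd ℂ) w; cA α * w, 0]
  map_add' w₁ w₂ := by
    ext i j
    fin_cases i <;> fin_cases j <;>
      simp [Matrix.add_apply, mul_add, map_add]
  map_smul' r w := by
    ext i j
    fin_cases i <;> fin_cases j <;>
      simp [Matrix.smul_apply, Complex.real_smul, map_mul] <;> ring

lemma mRep_sq (α : ℤˣ) (Q : QuadraticForm ℝ ℂ)
    (hQ : ∀ w : ℂ, Q w = (α : ℝ) * Complex.normSq w) (w : ℂ) :
    mRep α w * mRep α w = algebraMap ℝ (Matrix (Fin 2) (Fin 2) ℂ) (Q w) := by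
  ext i j
  have hcc : cA α * (starRingEnd ℂ) w * (cA α * w) = ((α : ℤ) : ℂ) * Complex.normSq w := by
    rw [show cA α * (starRingEnd ℂ) w * (cA α * w)
        = (cA α * cA α) * ((starRingEnd ℂ) w * w) by ring, cA_sq, Complex.normSq_eq_conj_mul_self]
  have hcc' : cA α ^ 2 * w * (starRingEnd ℂ) w = ((α : ℤ) : ℂ) * Complex.normSq w := by
    rw [show cA α ^ 2 * w * (starRingEnd ℂ) w
        = cA α * (starRingEnd ℂ) w * (cA α * w) by ring, hcc]
  fin_cases i <;> fin_cases j <;>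
    simp [mRep, Matrix.mul_fin_two, Matrix.algebraMap_matrix_apply, hQ, hcc, hcc',
      Complex.ofReal_mul] <;>
    ring_nf <;> simp [hcc', hcc]

end Aux

open CliffordAlgebra in
/-- `O₂(α)` is realized as the pin group `Pin₂(α)` inside the Clifford algebra of the
quadratic form `Q_α(w) = α·|w|²` on `ℂ ≅ ℝ²`: there is an injective group homomorphism
`φ_α : O₂(α) → Cl(Q_α)ˣ` with `φ_α(z,0̂) = x·1 + y·ι(1)ι(i)` and
`φ_α(z,1̂) = (x·1 + y·ι(1)ι(i))·ι(1)` for `z = x + iy`. -/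
theorem O2_realized_as_pin_group (α : ℤˣ) (Q : QuadraticForm ℝ ℂ)
    (hQ : ∀ w : ℂ, Q w = (α : ℝ) * Complex.normSq w) :
    ∃ φ : O2 α →* (CliffordAlgebra Q)ˣ,
      Function.Injective φ ∧
      (∀ z : Circle, ((φ ⟨z, 0⟩ : (CliffordAlgebra Q)ˣ) : CliffordAlgebra Q) =
        algebraMap ℝ (CliffordAlgebra Q) (z : ℂ).re +
          (z : ℂ).im • (ι Q 1 * ι Q Complex.I)) ∧
      (∀ z : Circle, ((φ ⟨z, 1⟩ : (CliffordAlgebra Q)ˣ) : CliffordAlgebra Q) =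
        (algebraMap ℝ (CliffordAlgebra Q) (z : ℂ).re +
          (z : ℂ).im • (ι Q 1 * ι Q Complex.I)) * ι Q 1) := by
  classical
  set Cl := CliffordAlgebra Q with hCl
  set e1 : Cl := ι Q 1 with he1
  set e2 : Cl := ι Q Complex.I with he2
  set ω : Cl := e1 * e2 with hω
  have hQ1 : Q 1 = (α : ℝ) := by rw [hQ]; simp
  have hQI : Q Complex.I = (α : ℝ) := by rw [hQ]; simp
  have h11 : e1 * e1 = algebraMap ℝ Cl (α : ℝ) := by rw [he1, ι_sq_scalar, hQ1]
  have h22 : e2 * e2 = algebraMap ℝ Cl (α : ℝ) := by rw [he2, ι_sq_scalar, hQI]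
  have hpolar : QuadraticMap.polar Q 1 Complex.I = 0 := by
    simp only [QuadraticMap.polar, hQ, Complex.normSq_apply]
    simp
    ring
  have hanti : e2 * e1 = -(e1 * e2) := by
    have h := ι_mul_ι_add_swap (Q := Q) 1 Complex.I
    rw [hpolar, map_zero, ← he1, ← he2] at h
    exact eq_neg_of_add_eq_zero_right h
  have hα2 : (α : ℝ) * (α : ℝ) = 1 := by
    rcases Int.units_eq_one_or α with rfl | rfl <;> norm_num
  have hωω : ω * ω = -1 := by
    calc ω * ω = e1 * (e2 * e1) * e2 := by rw [hω]; noncomm_ring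
    _ = -(e1 * e1 * (e2 * e2)) := by
      rw [hanti]
      have key : ∀ (R : Type) [Ring R] (a b : R), a * -(a * b) * b = -(a * a * (b * b)) := by
        intros; noncomm_ring
      exact key Cl e1 e2
    _ = -1 := by rw [h11, h22, ← map_mul, hα2, map_one]
  set U : ℂ → Cl := fun w => w.re • (1 : Cl) + w.im • ω with hUdef
  have hU : ∀ w₁ w₂ : ℂ, U (w₁ * w₂) = U w₁ * U w₂ := by
    intro w₁ w₂
    rw [hUdef]
    simp only [Complex.mul_re, Complex.mul_im]
    rw [key_mul hωω]
  have he1ω : e1 * ω = -(ω * e1) := by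
    calc e1 * ω = e1 * e1 * e2 := by rw [hω]; noncomm_ring
    _ = -(e1 * (e2 * e1)) := by
      rw [hanti]
      have key : ∀ (R : Type) [Ring R] (a b : R), a * a * b = -(a * -(a * b)) := by
        intros; noncomm_ring
      exact key Cl e1 e2
    _ = -(ω * e1) := by rw [hω]; noncomm_ring
  have he1U : ∀ w : ℂ, e1 * U w = U ((starRingEnd ℂ) w) * e1 := by
    intro w
    rw [hUdef]
    simp only [Complex.conj_re, Complex.conj_im]
    rw [mul_add, add_mul, mul_smul_comm, mul_smul_comm, smul_mul_assoc, smul_mul_assoc,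
      mul_one, one_mul, he1ω, smul_neg, neg_smul]
  have hUsgn : U ((sgnC α : Circle) : ℂ) = algebraMap ℝ Cl (α : ℝ) := by
    rcases Int.units_eq_one_or α with rfl | rfl <;>
      simp [hUdef, sgnC, negOneC, Algebra.algebraMap_eq_smul_one]
  set ψ : O2 α → Cl := fun g => U (g.z : ℂ) * (if g.t = 1 then e1 else 1) with hψdef
  have hψ1 : ψ 1 = 1 := by
    simp [hψdef, hUdef]
  have hψmul : ∀ g h : O2 α, ψ (g * h) = ψ g * ψ h := by
    rintro ⟨z₁, t₁⟩ ⟨z₂, t₂⟩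
    rcases Tw.zmod2_cases t₁ with rfl | rfl <;> rcases Tw.zmod2_cases t₂ with rfl | rfl <;>
      simp only [hψdef, Tw.mul_z, Tw.mul_t] <;>
      norm_num [show ((0 : ZMod 2) = 1) = False by decide,
        show ((1 : ZMod 2) = 1) = True by decide,
        show ((0 : ZMod 2) + 0 = 0) by decide, show ((0 : ZMod 2) + 1 = 1) by decide,
        show ((1 : ZMod 2) + 0 = 1) by decide, show ((1 : ZMod 2) + 1 = 0) by decide,
        show ((2 : ZMod 2) = 1) = False by decide]
    · exact hU _ _
    · rw [hU, mul_assoc]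
    · rw [hU, mul_assoc, ← he1U, ← mul_assoc]
    · rw [hU, hU, hUsgn]
      calc (algebraMap ℝ Cl) (α : ℝ) * U (z₁ : ℂ) * U ((starRingEnd ℂ) ((z₂ : Circle) : ℂ))
          = U (z₁ : ℂ) * (U ((starRingEnd ℂ) ((z₂ : Circle) : ℂ)) * e1 * e1) := by
            rw [mul_assoc, mul_assoc, h11, Algebra.commutes]
            noncomm_ring
        _ = U (z₁ : ℂ) * (e1 * U ((z₂ : Circle) : ℂ) * e1) := by rw [he1U]
        _ = U (z₁ : ℂ) * e1 * (U ((z₂ : Circle) : ℂ) * e1) := by noncomm_ring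
  have hψinv : ∀ g : O2 α, ψ g * ψ g⁻¹ = 1 := fun g => by
    rw [← hψmul, mul_inv_cancel, hψ1]
  have hψinv' : ∀ g : O2 α, ψ g⁻¹ * ψ g = 1 := fun g => by
    rw [← hψmul, inv_mul_cancel, hψ1]
  set φ : O2 α →* Clˣ :=
    { toFun := fun g => ⟨ψ g, ψ g⁻¹, hψinv g, hψinv' g⟩,
      map_one' := by ext; exact hψ1,
      map_mul' := fun g h => by ext; exact hψmul g h } with hφdef
  -- the matrix representation used to prove injectivity
  set f : CliffordAlgebra Q →ₐ[ℝ] Matrix (Fin 2) (Fin 2) ℂ :=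
    CliffordAlgebra.lift Q ⟨mRep α, mRep_sq α Q hQ⟩ with hfdef
  set D : ℂ → ℂ := fun w => (w.re : ℂ) + ((α : ℤ) : ℂ) * w.im * Complex.I with hDdef
  have hf1 : f e1 = !![0, cA α; cA α, 0] := by
    rw [he1, hfdef, CliffordAlgebra.lift_ι_apply]
    simp [mRep]
  have hf2 : f e2 = !![0, -(cA α * Complex.I); cA α * Complex.I, 0] := by
    rw [he2, hfdef, CliffordAlgebra.lift_ι_apply]
    simp [mRep, Complex.conj_I, mul_neg]
  have hfω : f ω = !![((α : ℤ) : ℂ) * Complex.I, 0; 0, -(((α : ℤ) : ℂ) * Complex.I)] := by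
    rw [hω, map_mul, hf1, hf2, Matrix.mul_fin_two]
    ext i j
    fin_cases i <;> fin_cases j <;> simp <;>
      linear_combination Complex.I * cA_sq α
  have hfU : ∀ w : ℂ, f (U w) = !![D w, 0; 0, (w.re : ℂ) - ((α : ℤ) : ℂ) * w.im * Complex.I] := by
    intro w
    rw [hUdef]
    simp only
    rw [map_add, map_smul, map_smul, map_one, hfω]
    ext i j
    fin_cases i <;> fin_cases j <;>
      simp [hDdef, Matrix.smul_apply, Matrix.add_apply, Matrix.one_apply, Complex.real_smul] <;>
      ring
  have hDne : ∀ z : Circle, D ((z : Circle) : ℂ) ≠ 0 := by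
    intro z hz
    have h0 : D ((z : Circle) : ℂ) = (((0:ℝ) : ℂ)) + ((α : ℤ) : ℂ) * ((0:ℝ)) * Complex.I := by
      rw [hz]; norm_num
    obtain ⟨h1, h2⟩ := complex_coeff_eq α h0
    have : ((z : Circle) : ℂ) = 0 := Complex.ext h1 h2
    exact Circle.coe_ne_zero z this
  have hfψ0 : ∀ z : Circle, f (ψ ⟨z, 0⟩) 0 0 = D (z : ℂ) ∧ f (ψ ⟨z, 0⟩) 0 1 = 0 := by
    intro z
    have : ψ ⟨z, 0⟩ = U (z : ℂ) := by
      simp [hψdef, show ((0 : ZMod 2) = 1) = False by decide]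
    rw [this, hfU]
    norm_num
  have hfψ1 : ∀ z : Circle, f (ψ ⟨z, 1⟩) 0 0 = 0 ∧ f (ψ ⟨z, 1⟩) 0 1 = D (z : ℂ) * cA α := by
    intro z
    have : ψ ⟨z, 1⟩ = U (z : ℂ) * e1 := by
      simp [hψdef]
    rw [this, map_mul, hfU, hf1, Matrix.mul_fin_two]
    norm_num
  have hinj : Function.Injective φ := by
    rintro ⟨z₁, t₁⟩ ⟨z₂, t₂⟩ hgh
    have hv : ψ ⟨z₁, t₁⟩ = ψ ⟨z₂, t₂⟩ := congrArg Units.val hgh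
    have hmm := congrArg f hv
    have hz : ∀ h : D ((z₁ : Circle) : ℂ) = D ((z₂ : Circle) : ℂ), z₁ = z₂ := by
      intro h
      obtain ⟨h1, h2⟩ := complex_coeff_eq α h
      exact Subtype.ext (Complex.ext h1 h2)
    rcases Tw.zmod2_cases t₁ with rfl | rfl <;> rcases Tw.zmod2_cases t₂ with rfl | rfl
    · have := (hfψ0 z₁).1.symm.trans ((congrFun (congrFun hmm 0) 0).trans (hfψ0 z₂).1)
      rw [hz this]
    · have := (hfψ0 z₁).1.symm.trans ((congrFun (congrFun hmm 0) 0).trans (hfψ1 z₂).1)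
      exact absurd this (hDne z₁)
    · have := (hfψ1 z₁).1.symm.trans ((congrFun (congrFun hmm 0) 0).trans (hfψ0 z₂).1)
      exact absurd this.symm (hDne z₂)
    · have := (hfψ1 z₁).2.symm.trans ((congrFun (congrFun hmm 0) 1).trans (hfψ1 z₂).2)
      rw [hz (mul_right_cancel₀ (cA_ne_zero α) this)]
  refine ⟨φ, hinj, fun z => ?_, fun z => ?_⟩
  · show ψ ⟨z, 0⟩ = _
    simp [hψdef, hUdef, Algebra.algebraMap_eq_smul_one, ← he1, ← he2, ← hω,
      show ((0 : ZMod 2) = 1) = False by decide]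
  · show ψ ⟨z, 1⟩ = _
    simp [hψdef, hUdef, Algebra.algebraMap_eq_smul_one, ← he1, ← he2, ← hω]
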